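/- Let F be an n × m Ferrers diagram, 1 ≤ d ≤ min{n,m}, and let C be an F_q-linear subspace of F_q[F] such that every nonzero M ∈ C has rank(M) ≥ d. Then dim_{F_q}(C) ≤ κ(F,d) (the Etzion–Silberstein bound). -/

import Mathlib

/-- The `n × m` matrix board `[n] × [m]` (1-based). -/
def board (n m : ℕ) : Finset (ℕ × ℕ) := Finset.Icc 1 n ×ˢ Finset.Icc 1 m

/-- `F` is an `n × m` Ferrers diagram: contained in the board, contains `(1,1)` and `(n,m)`,
right-aligned and top-aligned. -/
def IsFerrers (n m : ℕ) (F : Finset (ℕ × ℕ)) : Prop :=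
  F ⊆ board n m ∧ (1, 1) ∈ F ∧ (n, m) ∈ F ∧
  (∀ i j, (i, j) ∈ F → j < m → (i, j + 1) ∈ F) ∧
  (∀ i j, (i, j) ∈ F → 1 < i → (i - 1, j) ∈ F)

/-- The `r`-th diagonal of the `n × m` board: `{(i,j) : j - i = m - r}`. -/
def diag (n m r : ℕ) : Finset (ℕ × ℕ) :=
  (board n m).filter (fun p => p.2 + r = p.1 + m)

/-- The height `c_t` of the `t`-th column of `F`. -/
def colH (F : Finset (ℕ × ℕ)) (t : ℕ) : ℕ := (F.filter (fun p => p.2 = t)).card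

/-- `κ_j(F,d) = Σ_{t=1}^{m-d+1+j} max{c_t - j, 0}` (truncated subtraction). -/
def kappaJ (F : Finset (ℕ × ℕ)) (m d j : ℕ) : ℕ :=
  ∑ t ∈ Finset.Icc 1 (m - d + 1 + j), (colH F t - j)

/-- `κ(F,d) = min_{0 ≤ j ≤ d-1} κ_j(F,d)`. -/
noncomputable def kappa (F : Finset (ℕ × ℕ)) (m d : ℕ) : ℕ :=
  sInf (kappaJ F m d '' Set.Iio d)

/-- `Σ_{i=1}^{m+n-1} max{0, |D_i ∩ F| - (d-1)}` (truncated subtraction). -/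
def diagSum (n m : ℕ) (F : Finset (ℕ × ℕ)) (d : ℕ) : ℕ :=
  ∑ i ∈ Finset.Icc 1 (m + n - 1), ((diag n m i ∩ F).card - (d - 1))

/-- The pair `(F,d)` is MDS-constructible. -/
def MDSConstructible (n m : ℕ) (F : Finset (ℕ × ℕ)) (d : ℕ) : Prop :=
  kappa F m d = diagSum n m F d

/-- The space `F_q[F]` of `n × m` matrices over `K` supported on `F` (1-based indexing). -/
def supportedSub (K : Type) [Field K] (n m : ℕ) (F : Finset (ℕ × ℕ)) :
    Submodule K (Matrix (Fin n) (Fin m) K) where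
  carrier := {M | ∀ (i : Fin n) (j : Fin m), ((i : ℕ) + 1, (j : ℕ) + 1) ∉ F → M i j = 0}
  add_mem' := by
    intro a b ha hb i j h
    simp only [Matrix.add_apply, ha i j h, hb i j h, add_zero]
  zero_mem' := by intro i j h; rfl
  smul_mem' := by
    intro c a ha i j h
    simp only [Matrix.smul_apply, ha i j h, smul_zero]

section RankLemmas
variable {K : Type} [Field K] {n m : ℕ}

lemma myrank_le_card_rows (M : Matrix (Fin n) (Fin m) K) (R : Finset (Fin n))
    (h : ∀ i j, i ∉ R → M i j = 0) : M.rank ≤ R.card := by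
  classical
  have hsub : LinearMap.range M.mulVecLin ≤
      Submodule.span K ((R.image (fun i => Pi.single i (1:K))) : Set (Fin n → K)) := by
    rintro _ ⟨v, rfl⟩
    have hv : M.mulVecLin v = ∑ i ∈ R, (M.mulVecLin v i) • (Pi.single i (1:K) : Fin n → K) := by
      funext i'
      rw [Finset.sum_apply]
      simp only [Pi.smul_apply, Pi.single_apply, smul_eq_mul, mul_ite, mul_one, mul_zero]
      by_cases hi : i' ∈ R
      · rw [Finset.sum_ite_eq R i' (fun i => M.mulVecLin v i)]
        simp [hi]
      · rw [Finset.sum_ite_eq R i' (fun i => M.mulVecLin v i)]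
        simp only [hi, if_false]
        simp only [Matrix.mulVecLin_apply, Matrix.mulVec]
        exact Finset.sum_eq_zero fun j _ => by show M i' j * v j = 0; rw [h i' j hi, zero_mul]
    rw [hv]
    exact Submodule.sum_mem _ fun i hi => Submodule.smul_mem _ _
      (Submodule.subset_span (by simp; exact ⟨i, hi, rfl⟩))
  calc M.rank ≤ Module.finrank K ↥(Submodule.span K
        ((R.image (fun i => Pi.single i (1:K))) : Set (Fin n → K))) :=
        Submodule.finrank_mono hsub
    _ ≤ (R.image (fun i => Pi.single i (1:K))).card := finrank_span_finset_le_card _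
    _ ≤ R.card := Finset.card_image_le

lemma myrank_add_le (A B : Matrix (Fin n) (Fin m) K) : (A + B).rank ≤ A.rank + B.rank := by
  classical
  have h : LinearMap.range (A + B).mulVecLin ≤
      LinearMap.range A.mulVecLin ⊔ LinearMap.range B.mulVecLin := by
    rw [Matrix.mulVecLin_add]
    rintro _ ⟨v, rfl⟩
    exact Submodule.mem_sup.2 ⟨A.mulVecLin v, ⟨v, rfl⟩, B.mulVecLin v, ⟨v, rfl⟩, rfl⟩
  calc (A + B).rank ≤ Module.finrank K ↥(LinearMap.range A.mulVecLin ⊔ LinearMap.range B.mulVecLin) :=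
        Submodule.finrank_mono h
    _ ≤ A.rank + B.rank := Submodule.finrank_add_le_finrank_add_finrank _ _

lemma myrank_le_rows_add_cols (M : Matrix (Fin n) (Fin m) K) (R : Finset (Fin n))
    (T : Finset (Fin m)) (h : ∀ i j, i ∉ R → j ∉ T → M i j = 0) :
    M.rank ≤ R.card + T.card := by
  classical
  set M₁ : Matrix (Fin n) (Fin m) K := Matrix.of (fun i j => if i ∈ R then M i j else 0) with hM₁
  set M₂ : Matrix (Fin n) (Fin m) K := Matrix.of (fun i j => if i ∈ R then 0 else M i j) with hM₂
  have hsplit : M = M₁ + M₂ := by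
    funext i j
    by_cases hi : i ∈ R <;> simp [hM₁, hM₂, Matrix.add_apply, hi]
  have h1 : M₁.rank ≤ R.card := by
    apply myrank_le_card_rows
    intro i j hi
    simp [hM₁, hi]
  have h2 : M₂.rank ≤ T.card := by
    rw [← Matrix.rank_transpose]
    apply myrank_le_card_rows
    intro j i hj
    by_cases hi : i ∈ R <;> simp [hM₂, Matrix.transpose_apply, hi]
    exact h i j hi hj
  calc M.rank = (M₁ + M₂).rank := by rw [← hsplit]
    _ ≤ M₁.rank + M₂.rank := myrank_add_le _ _
    _ ≤ R.card + T.card := add_le_add h1 h2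

end RankLemmas


lemma ferrers_down {n m : ℕ} {F : Finset (ℕ × ℕ)} (hF : IsFerrers n m F) (t : ℕ) :
    ∀ k i', 1 ≤ i' → (i' + k, t) ∈ F → (i', t) ∈ F := by
  intro k
  induction k with
  | zero => intro i' _ h; simpa using h
  | succ k ih =>
    intro i' h1 h
    have h2 := hF.2.2.2.2 _ _ h (by omega)
    have h3 : i' + (k + 1) - 1 = i' + k := by omega
    rw [h3] at h2
    exact ih i' h1 h2

lemma card_fiber_le {n m jj : ℕ} {F : Finset (ℕ × ℕ)} (hF : IsFerrers n m F)
    (S : Finset (Fin n × Fin m)) (t : ℕ)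
    (hS : ∀ p ∈ S, ((p.1 : ℕ) + 1, (p.2 : ℕ) + 1) ∈ F ∧ jj < (p.1 : ℕ) + 1) :
    (S.filter (fun p => (p.2 : ℕ) + 1 = t)).card ≤ colH F t - jj := by
  classical
  set Fib := S.filter (fun p => (p.2 : ℕ) + 1 = t) with hFib
  rcases Finset.eq_empty_or_nonempty Fib with he | ⟨p₀, hp₀⟩
  · simp [he]
  · have hp₀' := Finset.mem_filter.1 hp₀
    obtain ⟨hp₀F, hp₀jj⟩ := hS p₀ hp₀'.1
    have hp₀t : ((p₀.2 : ℕ) + 1) = t := hp₀'.2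
    rw [hp₀t] at hp₀F
    -- all rows 1..jj of column t are in F
    have hdown : ∀ i' ∈ Finset.Icc 1 jj, (i', t) ∈ F := by
      intro i' hi'
      rw [Finset.mem_Icc] at hi'
      obtain ⟨k, hk⟩ := Nat.exists_eq_add_of_le (show i' ≤ (p₀.1 : ℕ) + 1 by omega)
      exact ferrers_down hF t k i' hi'.1 (hk ▸ hp₀F)
    set A := F.filter (fun p => p.2 = t) with hA
    set B₁ := Fib.image (fun p : Fin n × Fin m => ((p.1 : ℕ) + 1, t)) with hB₁
    set B₂ := (Finset.Icc 1 jj).image (fun i' => (i', t)) with hB₂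
    have hcard1 : B₁.card = Fib.card := by
      apply Finset.card_image_of_injOn
      intro p hp q hq hpq
      have h1 : (p.1 : ℕ) = (q.1 : ℕ) := by
        have := congrArg Prod.fst hpq; simpa using this
      have h2 : ((p.2 : ℕ) + 1) = t := (Finset.mem_filter.1 hp).2
      have h3 : ((q.2 : ℕ) + 1) = t := (Finset.mem_filter.1 hq).2
      have : p.1 = q.1 := Fin.ext h1
      have h4 : p.2 = q.2 := Fin.ext (by omega)
      exact Prod.ext this h4
    have hcard2 : B₂.card = jj := by
      rw [hB₂, Finset.card_image_of_injective _ (fun a b hab => (Prod.ext_iff.1 hab).1)]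
      simp
    have hdisj : Disjoint B₁ B₂ := by
      rw [Finset.disjoint_left]
      rintro ⟨a, b⟩ h1 h2
      rw [hB₁, Finset.mem_image] at h1
      rw [hB₂, Finset.mem_image] at h2
      obtain ⟨p, hp, hpe⟩ := h1
      obtain ⟨i', hi', hie⟩ := h2
      have hjj := (hS p (Finset.mem_filter.1 hp).1).2
      have ha1 : (p.1 : ℕ) + 1 = a := (Prod.ext_iff.1 hpe).1
      have ha2 : i' = a := (Prod.ext_iff.1 hie).1
      rw [Finset.mem_Icc] at hi'
      omega
    have hsub : B₁ ∪ B₂ ⊆ A := by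
      intro x hx
      rcases Finset.mem_union.1 hx with hx | hx
      · rw [hB₁, Finset.mem_image] at hx
        obtain ⟨p, hp, rfl⟩ := hx
        have hpf := Finset.mem_filter.1 hp
        have := (hS p hpf.1).1
        rw [hpf.2] at this
        exact Finset.mem_filter.2 ⟨this, rfl⟩
      · rw [hB₂, Finset.mem_image] at hx
        obtain ⟨i', hi', rfl⟩ := hx
        exact Finset.mem_filter.2 ⟨hdown i' hi', rfl⟩
    have := Finset.card_le_card hsub
    rw [Finset.card_union_of_disjoint hdisj, hcard1, hcard2] at this
    have hcol : A.card = colH F t := rfl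
    rw [hcol] at this
    exact Nat.le_sub_of_add_le this


theorem etzion_silberstein_bound (K : Type) [Field K] [Fintype K]
    (n m d : ℕ) (F : Finset (ℕ × ℕ)) (hF : IsFerrers n m F)
    (hd1 : 1 ≤ d) (hd2 : d ≤ min n m)
    (C : Submodule K (Matrix (Fin n) (Fin m) K)) (hC : C ≤ supportedSub K n m F)
    (hrk : ∀ M ∈ C, M ≠ 0 → d ≤ M.rank) :
    Module.finrank K C ≤ kappa F m d := by
  classical
  have hdm : d ≤ m := le_trans hd2 (min_le_right n m)
  -- pick the minimizing j
  have hne : (kappaJ F m d '' Set.Iio d).Nonempty := ⟨kappaJ F m d 0, 0, Set.mem_Iio.2 hd1, rfl⟩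
  obtain ⟨jj, hjjlt, hjjeq⟩ := Nat.sInf_mem hne
  rw [kappa, ← hjjeq]
  simp only [Set.mem_Iio] at hjjlt
  -- the set S of positions
  set S : Finset (Fin n × Fin m) := Finset.univ.filter
    (fun p => ((p.1 : ℕ) + 1, (p.2 : ℕ) + 1) ∈ F ∧ (p.2 : ℕ) + 1 ≤ m - d + 1 + jj ∧
      jj < (p.1 : ℕ) + 1) with hSdef
  -- restriction map
  let φ : C →ₗ[K] (↥S → K) :=
    { toFun := fun M p => (M : Matrix (Fin n) (Fin m) K) p.1.1 p.1.2
      map_add' := fun a b => rfl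
      map_smul' := fun c a => rfl }
  have hinj : Function.Injective φ := by
    rw [injective_iff_map_eq_zero]
    intro M hM0
    by_contra hMne
    have hMne' : (M : Matrix (Fin n) (Fin m) K) ≠ 0 := by
      simpa [Submodule.coe_eq_zero] using hMne
    have hrkM := hrk (M : Matrix (Fin n) (Fin m) K) M.2 hMne'
    -- M vanishes on S
    have hvan : ∀ p : Fin n × Fin m, p ∈ S → (M : Matrix (Fin n) (Fin m) K) p.1 p.2 = 0 := by
      intro p hp
      have := congrFun hM0 ⟨p, hp⟩
      exact this
    set R : Finset (Fin n) := Finset.univ.filter (fun i => (i : ℕ) + 1 ≤ jj) with hR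
    set T : Finset (Fin m) := Finset.univ.filter (fun j => m - d + 1 + jj < (j : ℕ) + 1) with hT
    have hrle : (M : Matrix (Fin n) (Fin m) K).rank ≤ R.card + T.card := by
      apply myrank_le_rows_add_cols
      intro i j hi hj
      rw [hR, Finset.mem_filter] at hi
      rw [hT, Finset.mem_filter] at hj
      simp only [Finset.mem_univ, true_and] at hi hj
      by_cases hmem : ((i : ℕ) + 1, (j : ℕ) + 1) ∈ F
      · exact hvan (i, j) (Finset.mem_filter.2 ⟨Finset.mem_univ _, hmem, show (↑j:ℕ)+1 ≤ m - d + 1 + jj by omega, show jj < (↑i:ℕ)+1 by omega⟩)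
      · exact hC M.2 i j hmem
    have hRle : R.card ≤ jj := by
      have : R.card ≤ (Finset.range jj).card := by
        apply Finset.card_le_card_of_injOn (fun i : Fin n => (i : ℕ))
        · intro i hi
          rw [hR, Finset.mem_coe, Finset.mem_filter] at hi
          simp only [Finset.mem_coe, Finset.mem_range]
          omega
        · intro a _ b _ hab
          exact Fin.ext hab
      simpa using this
    have hTle : T.card ≤ d - 1 - jj := by
      have h1 : T.card ≤ (Finset.Ico (m - d + 1 + jj) m).card := by
        apply Finset.card_le_card_of_injOn (fun j : Fin m => (j : ℕ))
        · intro j hj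
          rw [hT, Finset.mem_coe, Finset.mem_filter] at hj
          simp only [Finset.mem_univ, true_and] at hj
          simp only [Finset.mem_coe, Finset.mem_Ico]
          exact ⟨by omega, j.2⟩
        · intro a _ b _ hab
          exact Fin.ext hab
      rw [Nat.card_Ico] at h1
      omega
    omega
  have hfin : Module.finrank K C ≤ S.card := by
    have h1 : Module.finrank K C ≤ Module.finrank K (↥S → K) :=
      LinearMap.finrank_le_finrank_of_injective hinj
    rwa [Module.finrank_pi, Fintype.card_coe] at h1
  refine le_trans hfin ?_
  -- count S column by column
  have hmap : ∀ p ∈ S, (p.2 : ℕ) + 1 ∈ Finset.Icc 1 (m - d + 1 + jj) := by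
    intro p hp
    rw [hSdef, Finset.mem_filter] at hp
    rw [Finset.mem_Icc]
    omega
  rw [Finset.card_eq_sum_card_fiberwise hmap]
  rw [kappaJ]
  apply Finset.sum_le_sum
  intro t _
  apply card_fiber_le (jj := jj) hF
  intro p hp
  rw [hSdef, Finset.mem_filter] at hp
  exact ⟨hp.2.1, hp.2.2.2⟩
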